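/- For every tournament T on n vertices, (n − 3) · c_3(T) = 2·r_4(T) + w_4(T) + l_4(T), where c_3(T) is the number of 3-element subsets of V(T) inducing a cyclic triangle, and r_4(T), w_4(T), l_4(T) are the numbers of 4-element subsets of V(T) whose induced subtournaments are isomorphic to R₄, W₄, L₄ respectively. -/

import Mathlib

/-- A tournament on `n` vertices: an irreflexive relation such that for every
pair of distinct vertices exactly one direction holds. -/
structure Tournament (n : ℕ) where
  rel : Fin n → Fin n → Bool
  irrefl : ∀ v, rel v v = false
  total : ∀ u v, u ≠ v → rel u v = !rel v u

/-- The transitive tournament `Tr_k`. -/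
def Tr (k : ℕ) : Tournament k where
  rel i j := decide (i < j)
  irrefl v := by simp
  total u v h := by
    rcases lt_or_gt_of_ne h with h' | h'
    · simp [h', lt_asymm h']
    · simp [h', lt_asymm h']

/-- The cyclic triangle. -/
def C3 : Tournament 3 where
  rel := ![![false, true, false], ![false, false, true], ![true, false, false]]
  irrefl := by decide
  total := by decide

/-- `W₄`: the non-transitive tournament on 4 vertices with a "winner". -/
def W4 : Tournament 4 where
  rel := ![![false, true, true, true], ![false, false, true, false],
           ![false, false, false, true], ![false, true, false, false]]
  irrefl := by decide
  total := by decide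

/-- `L₄`: the non-transitive tournament on 4 vertices with a "loser". -/
def L4 : Tournament 4 where
  rel := ![![false, true, false, true], ![false, false, true, true],
           ![true, false, false, true], ![false, false, false, false]]
  irrefl := by decide
  total := by decide

/-- `R₄`: the tournament on 4 vertices with out-degree sequence (1,1,2,2). -/
def R4 : Tournament 4 where
  rel := ![![false, true, true, false], ![false, false, true, true],
           ![false, false, false, true], ![true, false, false, false]]
  irrefl := by decide
  total := by decide

/-- Two tournaments on the same number of vertices are isomorphic if some
permutation of the vertices carries one arc relation to the other. -/
def Isomorphic {k : ℕ} (S T : Tournament k) : Prop :=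
  ∃ e : Equiv.Perm (Fin k), ∀ i j, S.rel i j = T.rel (e i) (e j)

/-- The subtournament of `T` induced on the subset `A` is isomorphic to `S`. -/
def IsoOn {k n : ℕ} (S : Tournament k) (T : Tournament n) (A : Finset (Fin n)) : Prop :=
  ∃ f : Fin k → Fin n, Function.Injective f ∧ Finset.univ.image f = A ∧
    ∀ i j, S.rel i j = T.rel (f i) (f j)

open scoped Classical in
/-- The number of `k`-element subsets of the vertex set of `T` whose induced
subtournament is isomorphic to `S` (where `S` has `k` vertices). -/
noncomputable def copyCount {k n : ℕ} (S : Tournament k) (T : Tournament n) : ℕ :=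
  ((Finset.powersetCard k (Finset.univ : Finset (Fin n))).filter (IsoOn S T)).card

/-- The (unlabelled) density `p(S, T)`. -/
noncomputable def density {k n : ℕ} (S : Tournament k) (T : Tournament n) : ℝ :=
  (copyCount S T : ℝ) / (n.choose k : ℝ)

/-- The number of automorphisms of a tournament. -/
def autCount {k : ℕ} (S : Tournament k) : ℕ :=
  (Finset.univ.filter
    (fun e : Equiv.Perm (Fin k) => ∀ i j, S.rel i j = S.rel (e i) (e j))).card

/-- A sequence of tournaments with growing vertex sets is quasi-random if every
fixed tournament `S` on `k` vertices appears with density tending to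
`k! / (|Aut S| * 2^(k(k-1)/2))`. -/
def QuasiRandom {nn : ℕ → ℕ} (T : ∀ j, Tournament (nn j)) : Prop :=
  ∀ (k : ℕ) (S : Tournament k),
    Filter.Tendsto (fun j => density S (T j)) Filter.atTop
      (nhds ((k.factorial : ℝ) / ((autCount S : ℝ) * 2 ^ (k * (k - 1) / 2))))

/-- `D(u,v) = #{w : u→w ∧ w→v}`. -/
def Dcount {n : ℕ} (T : Tournament n) (u v : Fin n) : ℕ :=
  (Finset.univ.filter (fun w => T.rel u w ∧ T.rel w v)).card

/-- `C(u,v) = #{w : v→w ∧ w→u}`. -/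
def Ccount {n : ℕ} (T : Tournament n) (u v : Fin n) : ℕ :=
  (Finset.univ.filter (fun w => T.rel v w ∧ T.rel w u)).card

/-- `I(u,v) = #{w : w→u ∧ w→v}`. -/
def Icount {n : ℕ} (T : Tournament n) (u v : Fin n) : ℕ :=
  (Finset.univ.filter (fun w => T.rel w u ∧ T.rel w v)).card

/-- `O(u,v) = #{w : u→w ∧ v→w}`. -/
def Ocount {n : ℕ} (T : Tournament n) (u v : Fin n) : ℕ :=
  (Finset.univ.filter (fun w => T.rel u w ∧ T.rel v w)).card

/-- The subset `A` induces a transitive subtournament of `T`. -/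
def IsTransOn {n : ℕ} (T : Tournament n) (A : Finset (Fin n)) : Prop :=
  ∀ u ∈ A, ∀ v ∈ A, ∀ w ∈ A, T.rel u v → T.rel v w → T.rel u w

open scoped Classical in
/-- `tr_m(T)`: the number of `m`-element subsets of the vertex set of `T`
inducing a transitive subtournament. -/
noncomputable def trCount (m : ℕ) {n : ℕ} (T : Tournament n) : ℕ :=
  ((Finset.powersetCard m (Finset.univ : Finset (Fin n))).filter (IsTransOn T)).card

/-- The subtournament of `T` induced on a subset `A` of its vertices. -/
noncomputable def induce {n : ℕ} (T : Tournament n) (A : Finset (Fin n)) :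
    Tournament A.card where
  rel i j := T.rel (A.orderIsoOfFin rfl i) (A.orderIsoOfFin rfl j)
  irrefl i := T.irrefl _
  total i j h := T.total _ _ (fun hc => h ((A.orderIsoOfFin rfl).injective (Subtype.ext hc)))

/-- The out-neighbourhood `N⁺(u)` of a vertex. -/
def outSet {n : ℕ} (T : Tournament n) (u : Fin n) : Finset (Fin n) :=
  Finset.univ.filter (fun w => T.rel u w)

/-- The out-degree of a vertex. -/
def outDeg {n : ℕ} (T : Tournament n) (v : Fin n) : ℕ :=
  (Finset.univ.filter (fun w => T.rel v w)).card

/-- The multiset of out-degrees of a tournament. -/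
def outDegs {n : ℕ} (T : Tournament n) : Multiset ℕ :=
  Finset.univ.val.map (outDeg T)

/-- The arc relation of `T` is transitive. -/
def IsTransitiveT {k : ℕ} (S : Tournament k) : Prop :=
  ∀ u v w, S.rel u v → S.rel v w → S.rel u w


/-! ### Auxiliary machinery for the counting identity -/

namespace C3Aux

lemma rel_ne {n : ℕ} (T : Tournament n) {u v : Fin n} (h : T.rel u v = true) : u ≠ v := by
  intro he; rw [he, T.irrefl] at h; exact Bool.false_ne_true h

lemma rel_rev {n : ℕ} (T : Tournament n) {u v : Fin n} (h : T.rel u v = true) :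
    T.rel v u = false := by
  rw [T.total v u (Ne.symm (rel_ne T h)), h]; rfl

lemma Tournament.ext' {n : ℕ} {S T : Tournament n} (h : S.rel = T.rel) : S = T := by
  cases S; cases T; simpa using h

/-- A 3-set contains a cyclic triple. -/
def Cyc {n : ℕ} (T : Tournament n) (s : Finset (Fin n)) : Prop :=
  ∃ x ∈ s, ∃ y ∈ s, ∃ z ∈ s, T.rel x y ∧ T.rel y z ∧ T.rel z x

instance {n : ℕ} (T : Tournament n) (s : Finset (Fin n)) : Decidable (Cyc T s) := by
  unfold Cyc; infer_instance

def cyc3N (U : Tournament 4) : ℕ :=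
  ((Finset.powersetCard 3 (Finset.univ : Finset (Fin 4))).filter (fun s => Cyc U s)).card

/-- Isomorphism expressed via four image vertices. -/
def IsoB (S U : Tournament 4) : Prop :=
  ∃ p q r s : Fin 4, Function.Injective ![p,q,r,s] ∧
    ∀ i j, S.rel i j = U.rel (![p,q,r,s] i) (![p,q,r,s] j)

instance (S U : Tournament 4) : Decidable (IsoB S U) := by
  unfold IsoB; infer_instance

instance {k n : ℕ} (S : Tournament k) (T : Tournament n) (A : Finset (Fin n)) :
    Decidable (IsoOn S T A) := by unfold IsoOn; infer_instance

def bit (p : Prop) [Decidable p] : ℕ := if p then 1 else 0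

def mkRel (a b c d e f : Bool) : Fin 4 → Fin 4 → Bool :=
  ![![false, a, b, c], ![!a, false, d, e], ![!b, !d, false, f], ![!c, !e, !f, false]]

def mk4 (a b c d e f : Bool) : Tournament 4 where
  rel := mkRel a b c d e f
  irrefl := by revert a b c d e f; decide
  total := by revert a b c d e f; decide

set_option maxHeartbeats 40000000 in
theorem key6 : ∀ a b c d e f : Bool,
    cyc3N (mk4 a b c d e f) =
      2 * bit (IsoB R4 (mk4 a b c d e f)) + bit (IsoB W4 (mk4 a b c d e f))
        + bit (IsoB L4 (mk4 a b c d e f)) := by decide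

theorem repr4 (U : Tournament 4) :
    U = mk4 (U.rel 0 1) (U.rel 0 2) (U.rel 0 3) (U.rel 1 2) (U.rel 1 3) (U.rel 2 3) := by
  apply Tournament.ext'
  funext i j
  fin_cases i <;> fin_cases j <;>
    simp [mk4, mkRel, U.irrefl] <;>
    rw [U.total _ _ (by decide)]

theorem key6' (U : Tournament 4) :
    cyc3N U = 2 * bit (IsoB R4 U) + bit (IsoB W4 U) + bit (IsoB L4 U) := by
  rw [repr4 U]; exact key6 _ _ _ _ _ _

/-- For a 3-element set, `IsoOn C3` is the same as containing a cyclic triple. -/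
theorem isoOn_C3_iff {n : ℕ} (T : Tournament n) (A : Finset (Fin n)) (hA : A.card = 3) :
    IsoOn C3 T A ↔ Cyc T A := by
  constructor
  · rintro ⟨f, hinj, himg, hrel⟩
    have hm : ∀ i, f i ∈ A := fun i => himg ▸ Finset.mem_image_of_mem f (Finset.mem_univ i)
    refine ⟨f 0, hm 0, f 1, hm 1, f 2, hm 2, ?_, ?_, ?_⟩
    · have := hrel 0 1; simpa [C3] using this.symm
    · have := hrel 1 2; simpa [C3] using this.symm
    · have := hrel 2 0; simpa [C3] using this.symm
  · rintro ⟨x, hx, y, hy, z, hz, h1, h2, h3⟩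
    have hxy : x ≠ y := rel_ne T h1
    have hyz : y ≠ z := rel_ne T h2
    have hzx : z ≠ x := rel_ne T h3
    refine ⟨![x, y, z], ?_, ?_, ?_⟩
    · intro i j hij
      fin_cases i <;> fin_cases j <;> simp_all <;> tauto
    · have hsub : ({x, y, z} : Finset (Fin n)) ⊆ A := by
        intro w hw
        simp only [Finset.mem_insert, Finset.mem_singleton] at hw
        rcases hw with rfl | rfl | rfl <;> assumption
      have hcard : ({x, y, z} : Finset (Fin n)).card = 3 :=
        Finset.card_eq_three.mpr ⟨x, y, z, hxy, (Ne.symm hzx), hyz, rfl⟩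
      have himg : Finset.univ.image ![x, y, z] = ({x, y, z} : Finset (Fin n)) := by
        ext w
        simp only [Finset.mem_image, Finset.mem_univ, true_and, Finset.mem_insert,
          Finset.mem_singleton]
        constructor
        · rintro ⟨i, rfl⟩; fin_cases i <;> simp
        · rintro (rfl | rfl | rfl)
          exacts [⟨0, rfl⟩, ⟨1, rfl⟩, ⟨2, rfl⟩]
      rw [himg]
      exact Finset.eq_of_subset_of_card_le hsub (by omega)
    · intro i j
      fin_cases i <;> fin_cases j <;>
        simp [C3, T.irrefl, h1, h2, h3, rel_rev T h1, rel_rev T h2, rel_rev T h3,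
          Matrix.vecHead, Matrix.vecTail]

section PerB

variable {n : ℕ} (T : Tournament n) (B : Finset (Fin n))

/-- An enumeration of a 4-element subset. -/
noncomputable def enum4 (hB : B.card = 4) : Fin 4 → Fin n :=
  fun i => (B.orderIsoOfFin hB i : Fin n)

lemma enum4_inj (hB : B.card = 4) : Function.Injective (enum4 B hB) := by
  intro i j h
  exact (B.orderIsoOfFin hB).injective (Subtype.ext h)

lemma enum4_mem (hB : B.card = 4) (i : Fin 4) : enum4 B hB i ∈ B :=
  (B.orderIsoOfFin hB i).2

lemma enum4_img (hB : B.card = 4) : Finset.univ.image (enum4 B hB) = B := by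
  apply Finset.eq_of_subset_of_card_le
  · intro w hw
    rcases Finset.mem_image.mp hw with ⟨i, _, rfl⟩
    exact enum4_mem B hB i
  · rw [Finset.card_image_of_injective _ (enum4_inj B hB), hB]
    simp

lemma enum4_surj (hB : B.card = 4) {w : Fin n} (hw : w ∈ B) : ∃ i, enum4 B hB i = w := by
  rw [← enum4_img B hB] at hw
  rcases Finset.mem_image.mp hw with ⟨i, _, h⟩
  exact ⟨i, h⟩

/-- The pulled-back tournament on `Fin 4`. -/
noncomputable def pull (hB : B.card = 4) : Tournament 4 where
  rel i j := T.rel (enum4 B hB i) (enum4 B hB j)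
  irrefl i := T.irrefl _
  total i j h := T.total _ _ (fun hc => h (enum4_inj B hB hc))

theorem isoOn_iff_isoB (hB : B.card = 4) (S : Tournament 4) : IsoOn S T B ↔ IsoB S (pull T B hB) := by
  constructor
  · rintro ⟨f, hinj, himg, hrel⟩
    have hmem : ∀ i, f i ∈ B := fun i => himg ▸ Finset.mem_image_of_mem f (Finset.mem_univ i)
    choose e he using fun i => enum4_surj B hB (hmem i)
    have heinj : Function.Injective e := by
      intro i j h
      apply hinj
      rw [← he i, ← he j, h]
    have hvec : ∀ i, (![e 0, e 1, e 2, e 3] : Fin 4 → Fin 4) i = e i := by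
      intro i; fin_cases i <;> rfl
    refine ⟨e 0, e 1, e 2, e 3, ?_, ?_⟩
    · intro i j h
      rw [hvec i, hvec j] at h
      exact heinj h
    · intro i j
      rw [hvec i, hvec j]
      show S.rel i j = T.rel (enum4 B hB (e i)) (enum4 B hB (e j))
      rw [he i, he j]
      exact hrel i j
  · rintro ⟨p, q, r, s, hinj, hrel⟩
    set m : Fin 4 → Fin 4 := ![p, q, r, s] with hm
    refine ⟨enum4 B hB ∘ m, ?_, ?_, ?_⟩
    · exact (enum4_inj B hB).comp hinj
    · have h1 : Finset.univ.image m = (Finset.univ : Finset (Fin 4)) := by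
        apply Finset.eq_of_subset_of_card_le (Finset.subset_univ _)
        rw [Finset.card_image_of_injective _ hinj]
      calc Finset.univ.image (enum4 B hB ∘ m)
            = (Finset.univ.image m).image (enum4 B hB) := by rw [Finset.image_image]
        _ = Finset.univ.image (enum4 B hB) := by rw [h1]
        _ = B := enum4_img B hB
    · exact hrel

theorem cyc_card_eq (hB : B.card = 4) : ((Finset.powersetCard 3 B).filter (fun s => Cyc T s)).card
    = cyc3N (pull T B hB) := by
  symm
  apply Finset.card_bij (fun s _ => s.image (enum4 B hB))
  · intro s hs
    simp only [Finset.mem_filter, Finset.mem_powersetCard] at hs ⊢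
    obtain ⟨⟨hsub, hcard⟩, hcyc⟩ := hs
    refine ⟨⟨?_, ?_⟩, ?_⟩
    · intro w hw
      rcases Finset.mem_image.mp hw with ⟨i, _, rfl⟩
      exact enum4_mem B hB i
    · rw [Finset.card_image_of_injective _ (enum4_inj B hB), hcard]
    · obtain ⟨x, hx, y, hy, z, hz, h1, h2, h3⟩ := hcyc
      exact ⟨enum4 B hB x, Finset.mem_image_of_mem (enum4 B hB) hx, enum4 B hB y, Finset.mem_image_of_mem (enum4 B hB) hy,
        enum4 B hB z, Finset.mem_image_of_mem (enum4 B hB) hz, h1, h2, h3⟩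
  · intro s hs t ht h
    exact Finset.image_injective (enum4_inj B hB) h
  · intro t ht
    simp only [Finset.mem_filter, Finset.mem_powersetCard] at ht
    obtain ⟨⟨hsub, hcard⟩, hcyc⟩ := ht
    refine ⟨Finset.univ.filter (fun j => enum4 B hB j ∈ t), ?_, ?_⟩
    · have himg : (Finset.univ.filter (fun j => enum4 B hB j ∈ t)).image (enum4 B hB) = t := by
        apply Finset.Subset.antisymm
        · intro w hw
          rcases Finset.mem_image.mp hw with ⟨i, hi, rfl⟩
          exact (Finset.mem_filter.mp hi).2
        · intro w hw
          rcases enum4_surj B hB (hsub hw) with ⟨i, rfl⟩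
          exact Finset.mem_image_of_mem (enum4 B hB) (Finset.mem_filter.mpr ⟨Finset.mem_univ _, hw⟩)
      simp only [Finset.mem_filter, Finset.mem_powersetCard]
      refine ⟨⟨Finset.subset_univ _, ?_⟩, ?_⟩
      · have := Finset.card_image_of_injective
          (Finset.univ.filter (fun j => enum4 B hB j ∈ t)) (enum4_inj B hB)
        rw [himg, hcard] at this
        omega
      · obtain ⟨x, hx, y, hy, z, hz, h1, h2, h3⟩ := hcyc
        rcases enum4_surj B hB (hsub hx) with ⟨x', rfl⟩
        rcases enum4_surj B hB (hsub hy) with ⟨y', rfl⟩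
        rcases enum4_surj B hB (hsub hz) with ⟨z', rfl⟩
        exact ⟨x', Finset.mem_filter.mpr ⟨Finset.mem_univ _, hx⟩,
          y', Finset.mem_filter.mpr ⟨Finset.mem_univ _, hy⟩,
          z', Finset.mem_filter.mpr ⟨Finset.mem_univ _, hz⟩, h1, h2, h3⟩
    · apply Finset.Subset.antisymm
      · intro w hw
        rcases Finset.mem_image.mp hw with ⟨i, hi, rfl⟩
        exact (Finset.mem_filter.mp hi).2
      · intro w hw
        rcases enum4_surj B hB (hsub hw) with ⟨i, rfl⟩
        exact Finset.mem_image_of_mem (enum4 B hB) (Finset.mem_filter.mpr ⟨Finset.mem_univ _, hw⟩)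

/-- The heart of the identity, for a single 4-set. -/
theorem perB (hB : B.card = 4) :
    ((Finset.powersetCard 3 B).filter (fun s => Cyc T s)).card
    = 2 * bit (IsoOn R4 T B) + bit (IsoOn W4 T B) + bit (IsoOn L4 T B) := by
  rw [cyc_card_eq T B hB, key6' (pull T B hB)]
  have hR := isoOn_iff_isoB T B hB R4
  have hW := isoOn_iff_isoB T B hB W4
  have hL := isoOn_iff_isoB T B hB L4
  simp only [bit, ← hR, ← hW, ← hL]

end PerB

/-- Number of 4-sets containing a given 3-set. -/
theorem card_supersets {n : ℕ} (A : Finset (Fin n)) (hA : A.card = 3) :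
    ((Finset.powersetCard 4 (Finset.univ : Finset (Fin n))).filter
      (fun B => A ⊆ B)).card = n - 3 := by
  have key : ((Finset.powersetCard 4 (Finset.univ : Finset (Fin n))).filter
      (fun B => A ⊆ B)).card
      = (Finset.powersetCard 1 ((Finset.univ : Finset (Fin n)) \ A)).card := by
    apply Finset.card_bij' (fun B _ => B \ A) (fun C _ => A ∪ C)
    · intro B hB
      simp only [Finset.mem_filter, Finset.mem_powersetCard] at hB
      obtain ⟨⟨hsub, hcard⟩, hAB⟩ := hB
      rw [Finset.mem_powersetCard]
      constructor
      · exact Finset.sdiff_subset_sdiff hsub (le_refl A)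
      · rw [Finset.card_sdiff_of_subset hAB, hcard, hA]
    · intro C hC
      rw [Finset.mem_powersetCard] at hC
      obtain ⟨hsub, hcard⟩ := hC
      have hdisj : Disjoint A C := by
        apply Finset.disjoint_left.mpr
        intro a ha hac
        exact (Finset.mem_sdiff.mp (hsub hac)).2 ha
      simp only [Finset.mem_filter, Finset.mem_powersetCard]
      refine ⟨⟨Finset.subset_univ _, ?_⟩, Finset.subset_union_left⟩
      rw [Finset.card_union_of_disjoint hdisj, hA, hcard]
    · intro B hB
      simp only [Finset.mem_filter] at hB
      rw [Finset.union_comm]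
      exact Finset.sdiff_union_of_subset hB.2
    · intro C hC
      rw [Finset.mem_powersetCard] at hC
      have hdisj : Disjoint A C := by
        apply Finset.disjoint_left.mpr
        intro a ha hac
        exact (Finset.mem_sdiff.mp (hC.1 hac)).2 ha
      exact Finset.union_sdiff_cancel_left hdisj
  rw [key, Finset.card_powersetCard, Finset.card_sdiff_of_subset (Finset.subset_univ A), hA,
    Finset.card_univ, Fintype.card_fin, Nat.choose_one_right]

end C3Aux

/-- `(n-3) · c₃(T) = 2·r₄(T) + w₄(T) + l₄(T)`. -/
theorem c3_counting_identity (n : ℕ) (T : Tournament n) :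
    (n - 3) * copyCount C3 T =
      2 * copyCount R4 T + copyCount W4 T + copyCount L4 T := by
  classical
  set 𝒜 := (Finset.powersetCard 3 (Finset.univ : Finset (Fin n))).filter
    (fun A => C3Aux.Cyc T A) with h𝒜
  set ℬ := Finset.powersetCard 4 (Finset.univ : Finset (Fin n)) with hℬ
  -- copyCount C3 T = 𝒜.card
  have hc3 : copyCount C3 T = 𝒜.card := by
    unfold copyCount
    rw [Finset.filter_congr_decidable]
    apply Finset.card_bij (fun A _ => A) ?_ (fun _ _ _ _ h => h) (fun A hA => ⟨A, ?_, rfl⟩)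
    · intro A hA
      rw [Finset.mem_filter] at hA ⊢
      obtain ⟨hmem, hiso⟩ := hA
      exact ⟨hmem, (C3Aux.isoOn_C3_iff T A
        (Finset.mem_powersetCard.mp hmem).2).mp hiso⟩
    · rw [h𝒜, Finset.mem_filter] at hA
      rw [Finset.mem_filter]
      exact ⟨hA.1, (C3Aux.isoOn_C3_iff T A
        (Finset.mem_powersetCard.mp hA.1).2).mpr hA.2⟩
  have hcop : ∀ S : Tournament 4, copyCount S T = (ℬ.filter (fun B => IsoOn S T B)).card := by
    intro S
    unfold copyCount
    rw [Finset.filter_congr_decidable]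
  -- double counting
  have main : ∑ A ∈ 𝒜, (n - 3) = ∑ B ∈ ℬ,
      ((Finset.powersetCard 3 B).filter (fun s => C3Aux.Cyc T s)).card := by
    calc ∑ A ∈ 𝒜, (n - 3)
        = ∑ A ∈ 𝒜, (ℬ.filter (fun B => A ⊆ B)).card := by
          apply Finset.sum_congr rfl
          intro A hA
          rw [h𝒜, Finset.mem_filter] at hA
          rw [C3Aux.card_supersets A (Finset.mem_powersetCard.mp hA.1).2]
      _ = ∑ A ∈ 𝒜, ∑ B ∈ ℬ, if A ⊆ B then 1 else 0 := by
          apply Finset.sum_congr rfl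
          intro A _
          rw [Finset.card_filter]
      _ = ∑ B ∈ ℬ, ∑ A ∈ 𝒜, if A ⊆ B then 1 else 0 := Finset.sum_comm
      _ = ∑ B ∈ ℬ, ((Finset.powersetCard 3 B).filter (fun s => C3Aux.Cyc T s)).card := by
          apply Finset.sum_congr rfl
          intro B hB
          rw [← Finset.card_filter]
          congr 1
          ext A
          simp only [h𝒜, Finset.mem_filter, Finset.mem_powersetCard]
          constructor
          · rintro ⟨⟨⟨_, hcard⟩, hcyc⟩, hsub⟩
            exact ⟨⟨hsub, hcard⟩, hcyc⟩
          · rintro ⟨⟨hsub, hcard⟩, hcyc⟩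
            exact ⟨⟨⟨Finset.subset_univ _, hcard⟩, hcyc⟩, hsub⟩
  have sumB : ∑ B ∈ ℬ,
      ((Finset.powersetCard 3 B).filter (fun s => C3Aux.Cyc T s)).card
      = 2 * copyCount R4 T + copyCount W4 T + copyCount L4 T := by
    calc ∑ B ∈ ℬ, ((Finset.powersetCard 3 B).filter (fun s => C3Aux.Cyc T s)).card
        = ∑ B ∈ ℬ, (2 * C3Aux.bit (IsoOn R4 T B) + C3Aux.bit (IsoOn W4 T B)
            + C3Aux.bit (IsoOn L4 T B)) := by
          apply Finset.sum_congr rfl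
          intro B hB
          rw [hℬ, Finset.mem_powersetCard] at hB
          exact C3Aux.perB T B hB.2
      _ = 2 * (∑ B ∈ ℬ, C3Aux.bit (IsoOn R4 T B)) + (∑ B ∈ ℬ, C3Aux.bit (IsoOn W4 T B))
            + (∑ B ∈ ℬ, C3Aux.bit (IsoOn L4 T B)) := by
          rw [Finset.sum_add_distrib, Finset.sum_add_distrib, Finset.mul_sum]
      _ = 2 * copyCount R4 T + copyCount W4 T + copyCount L4 T := by
          rw [hcop R4, hcop W4, hcop L4]
          simp only [C3Aux.bit, Finset.card_filter]
  rw [hc3, ← sumB, ← main, Finset.sum_const, smul_eq_mul, mul_comm]
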